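/- If x * y is a plumbing of states and X ∈ C_{R,p→1}(x), X' ∈ C_{R,p→0}(x) are cycles that are identical away from the shared circle (through p), and Y ∈ C_{R,p→1}(y), Y' ∈ C_{R,p→0}(y) are chains such that Y + Y' is a cycle, then X * Y + X' * Y' is a cycle. -/

import Mathlib

attribute [local instance] Classical.propDecidable

/-- The local datum of the Khovanov differential at a crossing: changing an A-smoothing
to a B-smoothing either merges two circles `i ≠ j` of the source state (via the
relabeling `f`) or splits one circle into two circles `i ≠ j` of the target state
(via the relabeling `g`). -/
inductive KTrans (m n : ℕ) : Type
  | merge (f : Fin m → Fin n) (i j : Fin m) (hij : i ≠ j) (hf : f i = f j)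
  | split (g : Fin n → Fin m) (i j : Fin n) (hij : i ≠ j) (hg : g i = g j)

/-- The merge/split maps of the Frobenius algebra `R[q]/(q²)` acting on enhancements
(`true` = label 1 = `q`, `false` = label 0 = `1`):
merge: `q⊗q ↦ 0`, `1⊗q, q⊗1 ↦ q`, `1⊗1 ↦ 1`; split: `q ↦ q⊗q`, `1 ↦ q⊗1 + 1⊗q`. -/
noncomputable def ktransApply {R : Type*} [CommRing R] {m n : ℕ} :
    KTrans m n → (Fin m → Bool) → ((Fin n → Bool) →₀ R)
  | .merge f i j _ _, a =>
      if a i = true ∧ a j = true then 0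
      else Finsupp.single (fun l => decide (∃ k, f k = l ∧ a k = true)) 1
  | .split g i j _ _, a =>
      if a (g i) = true then Finsupp.single (a ∘ g) 1
      else Finsupp.single (Function.update (a ∘ g) i true) 1
        + Finsupp.single (Function.update (a ∘ g) j true) 1

/-- A combinatorial model of a link diagram for Viro-style Khovanov homology:
`c` crossings, states `s : Fin c → Bool` (`true` = A-smoothing), each state having
`circ s` circles, and for every A-smoothed crossing of every state the merge/split
transition datum to the state with that smoothing changed to B. -/
structure Diagram where
  c : ℕ
  circ : (Fin c → Bool) → ℕ
  trans : ∀ (s : Fin c → Bool) (t : Fin c), s t = true →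
    KTrans (circ s) (circ (Function.update s t false))

namespace Diagram

/-- Enhanced states: a state together with a `{0,1}`-labeling of its circles. -/
abbrev Enh (D : Diagram) : Type := Σ s : Fin D.c → Bool, Fin (D.circ s) → Bool

variable {R : Type*} [CommRing R]

/-- The Khovanov differential of an enhanced state:
`d X = ∑_t (-1)^{|A|_X^t} d_{c^t} X`, where `|A|_X^t` counts A-smoothings at crossings
of smaller index and `d_{c^t}` is the merge/split map (zero at B-smoothings). -/
noncomputable def dE (D : Diagram) (X : D.Enh) : D.Enh →₀ R :=
  ∑ t : Fin D.c,
    if h : X.1 t = true then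
      ((-1 : R) ^ (Finset.univ.filter fun r => r < t ∧ X.1 r = true).card) •
        Finsupp.mapDomain (fun b => (⟨Function.update X.1 t false, b⟩ : D.Enh))
          (ktransApply (D.trans X.1 t h) X.2)
    else 0

/-- The Khovanov differential on the chain module `C_R(D)`, the free `R`-module on
enhanced states. -/
noncomputable def d (D : Diagram) (Z : D.Enh →₀ R) : D.Enh →₀ R :=
  Z.sum fun e r => r • D.dE e

end Diagram


section PlumbAux

variable {R : Type*} [CommRing R]

lemma aux_d_mapDomain (D : Diagram) (s : Fin D.c → Bool)
    (W : (Fin (D.circ s) → Bool) →₀ R) :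
    D.d (Finsupp.mapDomain (fun a => (⟨s, a⟩ : D.Enh)) W)
      = W.sum fun a r => r • D.dE (R := R) ⟨s, a⟩ := by
  rw [Diagram.d]
  exact Finsupp.sum_mapDomain_index (fun _ => zero_smul _ _)
    (fun _ r1 r2 => add_smul r1 r2 _)

lemma aux_d_add (D : Diagram) (Z1 Z2 : D.Enh →₀ R) :
    D.d (Z1 + Z2) = D.d Z1 + D.d Z2 := by
  rw [Diagram.d, Diagram.d, Diagram.d]
  exact Finsupp.sum_add_index' (fun _ => zero_smul _ _)
    (fun _ r1 r2 => add_smul r1 r2 _)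

lemma aux_mapDomain_finsupp_sum {ι M N α β : Type*} [Zero M] [AddCommMonoid N]
    (g : α → β) (s : ι →₀ M) (v : ι → M → α →₀ N) :
    Finsupp.mapDomain g (s.sum v) = s.sum fun i m => Finsupp.mapDomain g (v i m) :=
  map_finsuppSum (Finsupp.mapDomain.addMonoidHom g) s v

end PlumbAux

section Plumbing

variable {R : Type*} [CommRing R] (Dx Dy : Diagram)
  (sx : Fin Dx.c → Bool) (sy : Fin Dy.c → Bool)
  (px : Fin (Dx.circ sx)) (py : Fin (Dy.circ sy))

/-- Enhanced-state basis for the chains in the plumbed diagram `D_x * D_y` reachable by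
one application of the differential from the plumbed state `x * y`: either an enhanced
state of `D_x` (labels of all circles, including the shared circle) together with labels
of the non-shared circles of `y` (`Sum.inl`), or labels of the non-shared circles of `x`
together with an enhanced state of `D_y` (`Sum.inr`). -/
abbrev PlumbEnh : Type :=
  (Dx.Enh × ({i : Fin (Dy.circ sy) // i ≠ py} → Bool)) ⊕
    (({i : Fin (Dx.circ sx) // i ≠ px} → Bool) × Dy.Enh)

/-- The Khovanov differential of the plumbed diagram on an enhancement of the plumbed
state `x * y` (crossings of `x` indexed before those of `y`): at `x`-crossings it acts
on the `x`-factor, and at `y`-crossings it acts on the `y`-labels (with the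
shared-circle label taken from the `x`-factor), with the usual signs. -/
noncomputable def dzE (a : Fin (Dx.circ sx) → Bool)
    (bh : {i : Fin (Dy.circ sy) // i ≠ py} → Bool) :
    PlumbEnh Dx Dy sx sy px py →₀ R :=
  (∑ t : Fin Dx.c,
    if h : sx t = true then
      ((-1 : R) ^ (Finset.univ.filter fun r => r < t ∧ sx r = true).card) •
        Finsupp.mapDomain
          (fun a' => Sum.inl ((⟨Function.update sx t false, a'⟩ : Dx.Enh), bh))
          (ktransApply (Dx.trans sx t h) a)
    else 0)
  + ((-1 : R) ^ (Finset.univ.filter fun r => sx r = true).card) •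
    ∑ t : Fin Dy.c,
      if h : sy t = true then
        ((-1 : R) ^ (Finset.univ.filter fun r => r < t ∧ sy r = true).card) •
          Finsupp.mapDomain
            (fun b' => Sum.inr ((fun i => a i.1),
              (⟨Function.update sy t false, b'⟩ : Dy.Enh)))
            (ktransApply (Dy.trans sy t h)
              (fun i => if hi : i = py then a px else bh ⟨i, hi⟩))
      else 0

/-- The differential of the plumbed diagram on chains supported on enhancements of the
plumbed state `x * y`. -/
noncomputable def dz
    (Z : ((Fin (Dx.circ sx) → Bool) × ({i : Fin (Dy.circ sy) // i ≠ py} → Bool)) →₀ R) :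
    PlumbEnh Dx Dy sx sy px py →₀ R :=
  Z.sum fun e r => r • dzE Dx Dy sx sy px py e.1 e.2


lemma aux_dzE_eq (a : Fin (Dx.circ sx) → Bool)
    (bh : {i : Fin (Dy.circ sy) // i ≠ py} → Bool) :
    dzE Dx Dy sx sy px py (R := R) a bh
      = Finsupp.mapDomain
          (fun e : Dx.Enh => (Sum.inl (e, bh) : PlumbEnh Dx Dy sx sy px py))
          (Dx.dE ⟨sx, a⟩)
      + ((-1 : R) ^ (Finset.univ.filter fun r => sx r = true).card) •
          Finsupp.mapDomain
            (fun e : Dy.Enh =>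
              (Sum.inr ((fun i => a i.1), e) : PlumbEnh Dx Dy sx sy px py))
            (Dy.dE ⟨sy, fun i => if hi : i = py then a px else bh ⟨i, hi⟩⟩) := by
  rw [dzE, Diagram.dE, Diagram.dE, Finsupp.mapDomain_finset_sum,
    Finsupp.mapDomain_finset_sum]
  congr 1
  · refine Finset.sum_congr rfl fun t _ => ?_
    by_cases h : sx t = true
    · rw [dif_pos h, dif_pos h, Finsupp.mapDomain_smul, ← Finsupp.mapDomain_comp]
      rfl
    · rw [dif_neg h, dif_neg h, Finsupp.mapDomain_zero]
  · congr 1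
    refine Finset.sum_congr rfl fun t _ => ?_
    by_cases h : sy t = true
    · rw [dif_pos h, dif_pos h, Finsupp.mapDomain_smul, ← Finsupp.mapDomain_comp]
      rfl
    · rw [dif_neg h, dif_neg h, Finsupp.mapDomain_zero]

set_option maxHeartbeats 2000000 in
/-- If `x * y` is a plumbing of states, `X ∈ C_{R,p→1}(x)` and `X' ∈ C_{R,p→0}(x)` are
cycles that are identical away from the shared circle through `p`, and
`Y ∈ C_{R,p→1}(y)`, `Y' ∈ C_{R,p→0}(y)` are chains with `Y + Y'` a cycle, then
`X * Y + X' * Y'` is a cycle. -/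
theorem plumbing_of_cycles
    (X X' : (Fin (Dx.circ sx) → Bool) →₀ R)
    (Y Y' : (Fin (Dy.circ sy) → Bool) →₀ R)
    (hX1 : ∀ a ∈ X.support, a px = true) (hX0 : ∀ a ∈ X'.support, a px = false)
    (hY1 : ∀ b ∈ Y.support, b py = true) (hY0 : ∀ b ∈ Y'.support, b py = false)
    (hXcycle : Dx.d (Finsupp.mapDomain (fun a => (⟨sx, a⟩ : Dx.Enh)) X) = 0)
    (hX'cycle : Dx.d (Finsupp.mapDomain (fun a => (⟨sx, a⟩ : Dx.Enh)) X') = 0)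
    (hXX' : Finsupp.mapDomain (fun a => Function.update a px false) X = X')
    (hYY'cycle : Dy.d (Finsupp.mapDomain (fun b => (⟨sy, b⟩ : Dy.Enh)) Y
        + Finsupp.mapDomain (fun b => (⟨sy, b⟩ : Dy.Enh)) Y') = 0) :
    dz Dx Dy sx sy px py (R := R)
        ((X.sum fun a ra => Y.sum fun b rb => Finsupp.single (a, fun i => b i.1) (ra * rb))
          + (X'.sum fun a ra => Y'.sum fun b rb =>
              Finsupp.single (a, fun i => b i.1) (ra * rb))) = 0 := by
  classical
  -- notation
  set ε : R := ((-1 : R) ^ (Finset.univ.filter fun r => sx r = true).card) with hε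
  set L : (((Fin (Dx.circ sx) → Bool) × ({i : Fin (Dy.circ sy) // i ≠ py} → Bool)) →₀ R)
      →ₗ[R] (PlumbEnh Dx Dy sx sy px py →₀ R) :=
    Finsupp.lsum ℕ (fun e => LinearMap.toSpanSingleton R _
      (dzE Dx Dy sx sy px py (R := R) e.1 e.2)) with hL
  have hdz : ∀ Z, dz Dx Dy sx sy px py (R := R) Z = L Z := fun Z => rfl
  have expand : ∀ (W : (Fin (Dx.circ sx) → Bool) →₀ R)
      (V : (Fin (Dy.circ sy) → Bool) →₀ R),
      L (W.sum fun a ra => V.sum fun b rb =>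
          Finsupp.single ((a, fun i => b i.1) :
            (Fin (Dx.circ sx) → Bool) × ({i : Fin (Dy.circ sy) // i ≠ py} → Bool)) (ra * rb))
      = W.sum fun a ra => V.sum fun b rb =>
          (ra * rb) • dzE Dx Dy sx sy px py (R := R) a (fun i => b i.1) := by
    intro W V
    rw [map_finsuppSum]
    refine Finsupp.sum_congr fun a _ => ?_
    rw [map_finsuppSum]
    refine Finsupp.sum_congr fun b _ => ?_
    rw [hL, Finsupp.lsum_single, LinearMap.toSpanSingleton_apply]
  have split : ∀ (W : (Fin (Dx.circ sx) → Bool) →₀ R)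
      (V : (Fin (Dy.circ sy) → Bool) →₀ R),
      (W.sum fun a ra => V.sum fun b rb =>
          (ra * rb) • dzE Dx Dy sx sy px py (R := R) a (fun i => b i.1))
      = (W.sum fun a ra => V.sum fun b rb => (ra * rb) •
            Finsupp.mapDomain (fun e : Dx.Enh =>
              (Sum.inl (e, fun i => b i.1) : PlumbEnh Dx Dy sx sy px py)) (Dx.dE (R := R) ⟨sx, a⟩))
        + (W.sum fun a ra => V.sum fun b rb => (ra * rb) •
            (ε • Finsupp.mapDomain (fun e : Dy.Enh =>
                (Sum.inr ((fun i => a i.1), e) : PlumbEnh Dx Dy sx sy px py))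
                (Dy.dE (R := R) ⟨sy, fun i => if hi : i = py then a px
                  else (fun j : {i : Fin (Dy.circ sy) // i ≠ py} => b j.1) ⟨i, hi⟩⟩))) := by
    intro W V
    rw [← Finsupp.sum_add]
    refine Finsupp.sum_congr fun a _ => ?_
    rw [← Finsupp.sum_add]
    refine Finsupp.sum_congr fun b _ => ?_
    rw [aux_dzE_eq, smul_add, hε]
  have hA : ∀ (W : (Fin (Dx.circ sx) → Bool) →₀ R),
      Dx.d (Finsupp.mapDomain (fun a => (⟨sx, a⟩ : Dx.Enh)) W) = (0 : Dx.Enh →₀ R) →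
      ∀ (V : (Fin (Dy.circ sy) → Bool) →₀ R),
      (W.sum fun a ra => V.sum fun b rb => (ra * rb) •
          Finsupp.mapDomain (fun e : Dx.Enh =>
            (Sum.inl (e, fun i => b i.1) : PlumbEnh Dx Dy sx sy px py)) (Dx.dE (R := R) ⟨sx, a⟩)) = 0 := by
    intro W hW V
    rw [aux_d_mapDomain] at hW
    refine (Finsupp.sum_comm W V _).trans ?_
    refine Eq.trans (Finsupp.sum_congr fun b _ => ?_) (Finsupp.sum_fun_zero _)
    have key : (W.sum fun a ra => (ra * V b) • Finsupp.mapDomain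
        (fun e : Dx.Enh => (Sum.inl (e, fun i => b i.1) : PlumbEnh Dx Dy sx sy px py))
        (Dx.dE (R := R) ⟨sx, a⟩))
        = (V b) • Finsupp.mapDomain
            (fun e : Dx.Enh => (Sum.inl (e, fun i => b i.1) : PlumbEnh Dx Dy sx sy px py))
            (W.sum fun a ra => ra • Dx.dE (R := R) ⟨sx, a⟩) := by
      rw [aux_mapDomain_finsupp_sum, Finsupp.smul_sum]
      refine Finsupp.sum_congr fun a _ => ?_
      rw [Finsupp.mapDomain_smul, smul_smul, mul_comm]
    rw [key, hW, Finsupp.mapDomain_zero, smul_zero]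
  -- the cycle condition for Y + Y'
  have hYsum : (Y.sum fun b rb => rb • Dy.dE (R := R) ⟨sy, b⟩)
      + (Y'.sum fun b rb => rb • Dy.dE (R := R) ⟨sy, b⟩) = 0 := by
    rw [aux_d_add, aux_d_mapDomain, aux_d_mapDomain] at hYY'cycle
    exact hYY'cycle
  rw [hdz, map_add,
    expand X Y, expand X' Y', split X Y, split X' Y', hA X hXcycle Y, hA X' hX'cycle Y',
    zero_add, zero_add]
  -- only the B-parts remain
  rw [← hXX', Finsupp.sum_mapDomain_index
    (fun a' => by
      refine Eq.trans (Finsupp.sum_congr fun b _ => ?_) (Finsupp.sum_fun_zero _)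
      rw [zero_mul, zero_smul])
    (fun a' r1 r2 => by
      rw [← Finsupp.sum_add]
      exact Finsupp.sum_congr fun b _ => by rw [add_mul, add_smul]),
    ← Finsupp.sum_add]
  refine Eq.trans (Finsupp.sum_congr fun a ha => ?_) (Finsupp.sum_fun_zero _)
  have hapx : a px = true := hX1 a ha
  have hres : (fun i : {i : Fin (Dx.circ sx) // i ≠ px} => Function.update a px false i.1)
      = fun i => a i.1 := funext fun i => Function.update_of_ne i.2 _ _
  have e1 : (Y.sum fun b rb => (X a * rb) •
        (ε • Finsupp.mapDomain (fun e : Dy.Enh =>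
            (Sum.inr ((fun i => a i.1), e) : PlumbEnh Dx Dy sx sy px py))
          (Dy.dE ⟨sy, fun i => if hi : i = py then a px
            else (fun j : {i : Fin (Dy.circ sy) // i ≠ py} => b j.1) ⟨i, hi⟩⟩)))
      = (X a) • (ε • Finsupp.mapDomain (fun e : Dy.Enh =>
            (Sum.inr ((fun i => a i.1), e) : PlumbEnh Dx Dy sx sy px py))
          (Y.sum fun b rb => rb • Dy.dE (R := R) ⟨sy, b⟩)) := by
    rw [aux_mapDomain_finsupp_sum, Finsupp.smul_sum, Finsupp.smul_sum]
    refine Finsupp.sum_congr fun b hb => ?_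
    have hg : (fun i => if hi : i = py then a px
        else (fun j : {i : Fin (Dy.circ sy) // i ≠ py} => b j.1) ⟨i, hi⟩) = b := by
      funext i
      by_cases hi : i = py
      · rw [dif_pos hi, hi, hapx, hY1 b hb]
      · rw [dif_neg hi]
    rw [hg, Finsupp.mapDomain_smul, smul_smul, smul_smul, smul_smul]
    congr 1
    ring
  have e2 : (Y'.sum fun b rb => (X a * rb) •
        (ε • Finsupp.mapDomain (fun e : Dy.Enh =>
            (Sum.inr ((fun i => Function.update a px false i.1), e) :
              PlumbEnh Dx Dy sx sy px py))
          (Dy.dE ⟨sy, fun i => if hi : i = py then Function.update a px false px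
            else (fun j : {i : Fin (Dy.circ sy) // i ≠ py} => b j.1) ⟨i, hi⟩⟩)))
      = (X a) • (ε • Finsupp.mapDomain (fun e : Dy.Enh =>
            (Sum.inr ((fun i => a i.1), e) : PlumbEnh Dx Dy sx sy px py))
          (Y'.sum fun b rb => rb • Dy.dE (R := R) ⟨sy, b⟩)) := by
    rw [aux_mapDomain_finsupp_sum, Finsupp.smul_sum, Finsupp.smul_sum]
    refine Finsupp.sum_congr fun b hb => ?_
    have hg : (fun i => if hi : i = py then Function.update a px false px
        else (fun j : {i : Fin (Dy.circ sy) // i ≠ py} => b j.1) ⟨i, hi⟩) = b := by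
      funext i
      by_cases hi : i = py
      · rw [dif_pos hi, hi, Function.update_self, hY0 b hb]
      · rw [dif_neg hi]
    rw [hg, hres, Finsupp.mapDomain_smul, smul_smul, smul_smul, smul_smul]
    congr 1
    ring
  rw [e1, e2, ← smul_add, ← smul_add, ← Finsupp.mapDomain_add, hYsum,
    Finsupp.mapDomain_zero, smul_zero, smul_zero]

end Plumbing
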